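/- arXiv:math/0205247 — 2 statements merged into one kernel-verified Lean document; each statement's English description precedes it below -/
import Mathlib

section
/- If a group G admits a homogeneous quasimorphism r that does not vanish identically on the commutator subgroup [G,G], then the diameter of [G,G] with respect to the commutator norm is infinite. -/
open scoped commutatorElement

/-- If a group `G` admits a homogeneous quasimorphism `r` that does not vanish identically on
the commutator subgroup, then the diameter of `[G,G]` with respect to the commutator norm is
infinite: for every `C` there is an element of `[G,G]` any representation of which as a
product of `n` simple commutators has `n > C`. -/
theorem commutator_norm_diameter_infinite_of_nonvanishing_quasimorphism
    {G : Type*} [Group G] (r : G → ℝ) (R : ℝ) (hR : 0 < R)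
    (hq : ∀ f g : G, |r (f * g) - r f - r g| ≤ R)
    (hhom : ∀ (g : G) (m : ℤ), r (g ^ m) = m * r g)
    (hnv : ∃ h ∈ commutator G, r h ≠ 0) :
    ∀ C : ℝ, ∃ h : G, h ∈ commutator G ∧
      ∀ (n : ℕ) (c : Fin n → G × G),
        h = (List.ofFn fun i => ⁅(c i).1, (c i).2⁆).prod → C < (n : ℝ) := by
  have hone : r 1 = 0 := by
    have := hhom 1 0; simpa using this
  have hinv : ∀ g : G, r g⁻¹ = - r g := by
    intro g
    have := hhom g (-1); simpa using this
  -- bound on a single commutator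
  have hcomm : ∀ a b : G, |r ⁅a, b⁆| ≤ 3 * R := by
    intro a b
    have h1 := abs_le.mp (hq a b)
    have h2 := abs_le.mp (hq (a * b) a⁻¹)
    have h3 := abs_le.mp (hq (a * b * a⁻¹) b⁻¹)
    have e : ⁅a, b⁆ = a * b * a⁻¹ * b⁻¹ := commutatorElement_def a b
    rw [e]
    rw [hinv a] at h2
    rw [hinv b] at h3
    rw [abs_le]
    constructor <;> linarith [h1.1, h1.2, h2.1, h2.2, h3.1, h3.2]
  -- bound on a product of commutators
  have hprod : ∀ l : List G, (∀ x ∈ l, |r x| ≤ 3 * R) →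
      |r l.prod| ≤ 4 * l.length * R := by
    intro l
    induction l with
    | nil => intro _; simp [hone]
    | cons a t ih =>
      intro hx
      have ha : |r a| ≤ 3 * R := hx a List.mem_cons_self
      have ht : |r t.prod| ≤ 4 * t.length * R :=
        ih fun x hxm => hx x (List.mem_cons_of_mem a hxm)
      have hq1 := abs_le.mp (hq a t.prod)
      have ha' := abs_le.mp ha
      have ht' := abs_le.mp ht
      rw [List.prod_cons, abs_le]
      simp only [List.length_cons]
      push_cast
      constructor <;> nlinarith [hq1.1, hq1.2, ha'.1, ha'.2, ht'.1, ht'.2]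
  obtain ⟨h₀, hh₀, hr₀⟩ := hnv
  intro C
  have hr₀' : 0 < |r h₀| := abs_pos.mpr hr₀
  obtain ⟨m, hm⟩ := exists_nat_gt (C * (4 * R) / |r h₀|)
  refine ⟨h₀ ^ m, pow_mem hh₀ m, ?_⟩
  intro n c hrep
  have hmem : ∀ x ∈ (List.ofFn fun i => ⁅(c i).1, (c i).2⁆), |r x| ≤ 3 * R := by
    intro x hxm
    rw [List.mem_ofFn] at hxm
    obtain ⟨i, hi⟩ := hxm
    rw [← hi]
    exact hcomm _ _
  have hb := hprod _ hmem
  rw [← hrep] at hb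
  have hlen : (List.ofFn fun i => ⁅(c i).1, (c i).2⁆).length = n := List.length_ofFn
  rw [hlen] at hb
  have hrm : r (h₀ ^ m) = (m : ℝ) * r h₀ := by
    have := hhom h₀ (m : ℤ)
    rw [zpow_natCast] at this
    simpa using this
  have habs : (m : ℝ) * |r h₀| ≤ 4 * n * R := by
    calc (m : ℝ) * |r h₀| = |r (h₀ ^ m)| := by
          rw [hrm, abs_mul, abs_of_nonneg (by positivity : (0:ℝ) ≤ (m:ℝ))]
      _ ≤ 4 * n * R := hb
  have hm' : C * (4 * R) < (m : ℝ) * |r h₀| := by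
    rw [div_lt_iff₀ hr₀'] at hm
    linarith
  nlinarith
end

section
/- Every measured tree has a unique median. That is, if (T, ϱ) is a finite tree equipped with a non-atomic Borel probability measure whose restriction to each open edge is homeomorphic to the Lebesgue measure on an open interval, then there exists exactly one point x ∈ T such that the measure of each connected component of T \ {x} does not exceed 1/2. -/
/-- A measured tree: a finite topological tree (compact, connected, Hausdorff, uniquely
arcwise connected, with a finite vertex set whose complementary components — the open
edges — are homeomorphic to open intervals, and with finitely many connected components
of the complement of any point), equipped with a non-atomic Borel probability measure
that is positive on every nonempty open set (in particular on every nondegenerate subarc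
of every edge) and gives each vertex measure `0`. -/
structure MeasuredTree where
  carrier : Type
  [topInst : TopologicalSpace carrier]
  [measInst : MeasurableSpace carrier]
  [borelInst : BorelSpace carrier]
  [compactInst : CompactSpace carrier]
  [connInst : ConnectedSpace carrier]
  [t2Inst : T2Space carrier]
  vertices : Finset carrier
  arc : ∀ x y : carrier, ∃ A : Set carrier, IsPreconnected A ∧ x ∈ A ∧ y ∈ A ∧
    ∀ B : Set carrier, IsPreconnected B → x ∈ B → y ∈ B → A ⊆ B
  finiteComponents : ∀ x : carrier,
    {C : Set carrier | ∃ y : carrier, y ≠ x ∧ C = connectedComponentIn {x}ᶜ y}.Finite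
  edgeHomeo : ∀ y : carrier, y ∉ vertices →
    Nonempty ((connectedComponentIn ((vertices : Set carrier))ᶜ y) ≃ₜ Set.Ioo (0 : ℝ) 1)
  μ : MeasureTheory.Measure carrier
  [probInst : MeasureTheory.IsProbabilityMeasure μ]
  nonatomic : ∀ x : carrier, μ {x} = 0
  openPos : ∀ U : Set carrier, IsOpen U → U.Nonempty → 0 < μ U

attribute [instance] MeasuredTree.topInst MeasuredTree.measInst MeasuredTree.borelInst
  MeasuredTree.compactInst MeasuredTree.connInst MeasuredTree.t2Inst MeasuredTree.probInst
/-- The measure of the connected component of `y` in the complement of `x`. -/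
noncomputable def MeasuredTree.componentMeasure (M : MeasuredTree) (x y : M.carrier) :
    ENNReal :=
  M.μ (connectedComponentIn {x}ᶜ y)

/-- A point `x` of a measured tree is a median if every connected component of the
complement of `x` has measure at most `1/2`. -/
def MeasuredTree.IsMedian (M : MeasuredTree) (x : M.carrier) : Prop :=
  ∀ y : M.carrier, y ≠ x → M.componentMeasure x y ≤ 1 / 2

/-- `φ(x)` is the maximum of the measures of the connected components of the complement
of `x`. -/
noncomputable def MeasuredTree.phi (M : MeasuredTree) (x : M.carrier) : ENNReal :=
  ⨆ y : {y : M.carrier // y ≠ x}, M.componentMeasure x y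

open Set Topology MeasureTheory Filter

namespace MedianAux

variable (M : MeasuredTree)

noncomputable def arcSet (x y : M.carrier) : Set M.carrier := (M.arc x y).choose

lemma arcSet_preconnected (x y : M.carrier) : IsPreconnected (arcSet M x y) :=
  (M.arc x y).choose_spec.1

lemma left_mem_arcSet (x y : M.carrier) : x ∈ arcSet M x y :=
  (M.arc x y).choose_spec.2.1

lemma right_mem_arcSet (x y : M.carrier) : y ∈ arcSet M x y :=
  (M.arc x y).choose_spec.2.2.1

lemma arcSet_min {x y : M.carrier} {B : Set M.carrier} (hB : IsPreconnected B)
    (hx : x ∈ B) (hy : y ∈ B) : arcSet M x y ⊆ B :=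
  (M.arc x y).choose_spec.2.2.2 B hB hx hy

/-- In a tree, the intersection of two preconnected sets is preconnected. -/
lemma inter_preconnected {A B : Set M.carrier} (hA : IsPreconnected A)
    (hB : IsPreconnected B) : IsPreconnected (A ∩ B) := by
  rcases (A ∩ B).eq_empty_or_nonempty with h | ⟨u, hu⟩
  · rw [h]; exact isPreconnected_empty
  · have key : A ∩ B = ⋃₀ {s | ∃ v ∈ A ∩ B, s = arcSet M u v} := by
      apply Subset.antisymm
      · intro v hv
        exact ⟨arcSet M u v, ⟨v, hv, rfl⟩, right_mem_arcSet M u v⟩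
      · rintro z ⟨s, ⟨v, hv, rfl⟩, hz⟩
        exact ⟨arcSet_min M hA hu.1 hv.1 hz, arcSet_min M hB hu.2 hv.2 hz⟩
    rw [key]
    refine isPreconnected_sUnion u _ ?_ ?_
    · rintro s ⟨v, hv, rfl⟩; exact left_mem_arcSet M u v
    · rintro s ⟨v, hv, rfl⟩; exact arcSet_preconnected M u v

/-- Helly property for three closed preconnected pairwise intersecting sets. -/
lemma helly3 {A B C : Set M.carrier} (hA : IsClosed A) (hB : IsClosed B) (hC : IsClosed C)
    (pA : IsPreconnected A) (pB : IsPreconnected B) (pC : IsPreconnected C)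
    (hAB : (A ∩ B).Nonempty) (hAC : (A ∩ C).Nonempty) (hBC : (B ∩ C).Nonempty) :
    (A ∩ B ∩ C).Nonempty := by
  obtain ⟨r, hrA, hrB⟩ := hAB
  obtain ⟨q, hqA, hqC⟩ := hAC
  obtain ⟨p, hpB, hpC⟩ := hBC
  -- closures of arcs
  have hP1 : closure (arcSet M q r) ⊆ A :=
    closure_minimal (arcSet_min M pA hqA hrA) hA
  have hP2 : closure (arcSet M p r) ⊆ B :=
    closure_minimal (arcSet_min M pB hpB hrB) hB
  have hP3 : closure (arcSet M p q) ⊆ C :=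
    closure_minimal (arcSet_min M pC hpC hqC) hC
  have hcover : arcSet M p r ⊆ arcSet M p q ∪ arcSet M q r := by
    refine arcSet_min M ?_ (Or.inl (left_mem_arcSet M p q)) (Or.inr (right_mem_arcSet M q r))
    exact (arcSet_preconnected M p q).union q (right_mem_arcSet M p q)
      (left_mem_arcSet M q r) (arcSet_preconnected M q r)
  have hcover' : closure (arcSet M p r) ⊆ closure (arcSet M p q) ∪ closure (arcSet M q r) := by
    have := closure_mono hcover
    rwa [closure_union] at this
  have hpre : IsPreconnected (closure (arcSet M p r)) :=
    (arcSet_preconnected M p r).closure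
  have h1 : (closure (arcSet M p r) ∩ closure (arcSet M q r)).Nonempty :=
    ⟨r, subset_closure (right_mem_arcSet M p r), subset_closure (right_mem_arcSet M q r)⟩
  have h2 : (closure (arcSet M p r) ∩ closure (arcSet M p q)).Nonempty :=
    ⟨p, subset_closure (left_mem_arcSet M p r), subset_closure (left_mem_arcSet M p q)⟩
  obtain ⟨z, hz, hz1, hz2⟩ := isPreconnected_closed_iff.mp hpre _ _ isClosed_closure
    isClosed_closure hcover' h2 h1
  exact ⟨z, ⟨⟨hP1 hz2, hP2 hz⟩, hP3 hz1⟩⟩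

/-! ### Components -/

lemma eq_of_mem_compIn {F : Set M.carrier} {a b z : M.carrier}
    (ha : z ∈ connectedComponentIn F a) (hb : z ∈ connectedComponentIn F b) :
    connectedComponentIn F a = connectedComponentIn F b := by
  rw [connectedComponentIn_eq ha, connectedComponentIn_eq hb]

/-- If an open set has finitely many connected components, each is open. -/
lemma open_components {F : Set M.carrier} (hF : IsOpen F)
    (hfin : {C : Set M.carrier | ∃ y ∈ F, C = connectedComponentIn F y}.Finite)
    (y : M.carrier) : IsOpen (connectedComponentIn F y) := by
  by_cases hy : y ∈ F
  · rw [connectedComponentIn_eq_image hy]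
    apply hF.isOpenMap_subtype_val
    -- finitely many components in the subtype
    have hfin' : {C : Set F | ∃ z : F, C = connectedComponent z}.Finite := by
      have hsub : (Set.image Subtype.val) ''
          {C : Set F | ∃ z : F, C = connectedComponent z} ⊆
          {C : Set M.carrier | ∃ y ∈ F, C = connectedComponentIn F y} := by
        rintro _ ⟨D, ⟨z, rfl⟩, rfl⟩
        exact ⟨z, z.2, by rw [connectedComponentIn_eq_image z.2]⟩
      have : ((Set.image Subtype.val) ''
          {C : Set F | ∃ z : F, C = connectedComponent z}).Finite := hfin.subset hsub
      exact this.of_finite_image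
        ((Set.image_injective.mpr Subtype.val_injective).injOn)
    -- complement of the component is a finite union of closed components
    have hcompl : (connectedComponent (⟨y, hy⟩ : F))ᶜ =
        ⋃₀ {C : Set F | (∃ z : F, C = connectedComponent z) ∧
          C ≠ connectedComponent (⟨y, hy⟩ : F)} := by
      ext w
      constructor
      · intro hw
        refine ⟨connectedComponent w, ⟨⟨w, rfl⟩, ?_⟩, mem_connectedComponent⟩
        intro he
        exact hw (he ▸ mem_connectedComponent)
      · rintro ⟨_, ⟨⟨z, rfl⟩, hne⟩, hw⟩ hmem
        exact hne ((connectedComponent_eq hw).trans (connectedComponent_eq hmem).symm)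
    rw [← isClosed_compl_iff, hcompl, sUnion_eq_biUnion]
    apply Set.Finite.isClosed_biUnion (hfin'.subset (fun C hC => hC.1))
    rintro C ⟨⟨z, rfl⟩, _⟩
    exact isClosed_connectedComponent
  · rw [connectedComponentIn_eq_empty hy]
    exact isOpen_empty

lemma isOpen_compIn (x y : M.carrier) : IsOpen (connectedComponentIn {x}ᶜ y) := by
  refine open_components M isClosed_singleton.isOpen_compl ?_ y
  have := M.finiteComponents x
  refine this.subset ?_
  rintro C ⟨z, hz, rfl⟩
  exact ⟨z, hz, rfl⟩

lemma mem_closure_compIn {x y : M.carrier} (hy : y ≠ x) :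
    x ∈ closure (connectedComponentIn {x}ᶜ y) := by
  by_contra hx
  set K := connectedComponentIn {x}ᶜ y with hK
  have hKcl : closure K ⊆ K := by
    apply IsPreconnected.subset_connectedComponentIn
      isPreconnected_connectedComponentIn.closure
      (subset_closure (mem_connectedComponentIn (by simpa using hy)))
    intro z hz
    simp only [mem_compl_iff, mem_singleton_iff]
    rintro rfl
    exact hx hz
  have hclopen : IsClopen K := ⟨closure_subset_iff_isClosed.mp hKcl, isOpen_compIn M x y⟩
  rcases isClopen_iff.mp hclopen with h | h
  · have : y ∈ K := mem_connectedComponentIn (by simpa using hy)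
    rw [h] at this; exact this
  · have : x ∈ K := h ▸ mem_univ x
    exact (connectedComponentIn_subset _ _ this) rfl

lemma closure_compIn_subset (x y : M.carrier) :
    closure (connectedComponentIn {x}ᶜ y) ⊆ connectedComponentIn {x}ᶜ y ∪ {x} := by
  intro z hz
  by_contra hzm
  rw [mem_union] at hzm
  push_neg at hzm
  obtain ⟨hz1, hz2⟩ := hzm
  have hzx : z ≠ x := by simpa using hz2
  have hzopen : IsOpen (connectedComponentIn {x}ᶜ z) := isOpen_compIn M x z
  have hzmem : z ∈ connectedComponentIn {x}ᶜ z := mem_connectedComponentIn (by simpa using hzx)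
  obtain ⟨w, hw1, hw2⟩ := mem_closure_iff.mp hz ((connectedComponentIn {x}ᶜ z)) hzopen hzmem
  exact hz1 ((eq_of_mem_compIn M hw2 hw1) ▸ hzmem)

/-! ### Generic interval-segment machinery -/

section Seg

variable {α : Type*} [TopologicalSpace α]

/-- The "flip" homeomorphism of the open unit interval. -/
def flipI : (Set.Ioo (0:ℝ) 1) ≃ₜ (Set.Ioo (0:ℝ) 1) where
  toFun := fun a => ⟨1 - a.1, ⟨by linarith [a.2.2], by linarith [a.2.1]⟩⟩
  invFun := fun a => ⟨1 - a.1, ⟨by linarith [a.2.2], by linarith [a.2.1]⟩⟩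
  left_inv := fun a => Subtype.ext (by simp)
  right_inv := fun a => Subtype.ext (by simp)
  continuous_toFun := Continuous.subtype_mk (continuous_const.sub continuous_subtype_val) _
  continuous_invFun := Continuous.subtype_mk (continuous_const.sub continuous_subtype_val) _

variable {E : Set α} (h : E ≃ₜ (Set.Ioo (0:ℝ) 1))

/-- The part of `E` whose coordinate lies in `J`. -/
def seg (J : Set ℝ) : Set α :=
  Subtype.val '' (h.symm '' ((fun a : (Set.Ioo (0:ℝ) 1) => a.1) ⁻¹' J))

lemma seg_subset (J : Set ℝ) : seg h J ⊆ E := by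
  rintro _ ⟨a, -, rfl⟩; exact a.2

lemma mem_seg_iff {J : Set ℝ} {z : α} :
    z ∈ seg h J ↔ ∃ hz : z ∈ E, (h ⟨z, hz⟩).1 ∈ J := by
  constructor
  · rintro ⟨b, ⟨a, haJ, rfl⟩, rfl⟩
    refine ⟨(h.symm a).2, ?_⟩
    have : (⟨(h.symm a).1, (h.symm a).2⟩ : E) = h.symm a := Subtype.ext rfl
    rw [this, h.apply_symm_apply]
    exact haJ
  · rintro ⟨hz, hJ⟩
    exact ⟨h.symm (h ⟨z, hz⟩), ⟨h ⟨z, hz⟩, hJ, rfl⟩, by simp⟩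

lemma seg_mono {J J' : Set ℝ} (hJJ : J ⊆ J') : seg h J ⊆ seg h J' := by
  intro z hz
  rw [mem_seg_iff] at hz ⊢
  obtain ⟨hz1, hz2⟩ := hz
  exact ⟨hz1, hJJ hz2⟩

lemma seg_preconnected {J : Set ℝ} (hJ : IsPreconnected J)
    (hJI : J ⊆ Set.Ioo (0:ℝ) 1) : IsPreconnected (seg h J) := by
  have h1 : IsPreconnected ((fun a : (Set.Ioo (0:ℝ) 1) => a.1) ⁻¹' J) := by
    refine IsInducing.subtypeVal.isPreconnected_image.mp ?_
    rwa [Subtype.image_preimage_coe, inter_eq_right.mpr hJI]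
  exact ((h1.image _ h.symm.continuous.continuousOn).image _
    continuous_subtype_val.continuousOn)

lemma seg_univ : seg h (Set.Ioo (0:ℝ) 1) = E := by
  apply Subset.antisymm (seg_subset h _)
  intro z hz
  rw [mem_seg_iff]
  exact ⟨hz, (h ⟨z, hz⟩).2⟩

/-- The point of `E` with coordinate `t`. -/
def ptOf (t : ℝ) (ht : t ∈ Set.Ioo (0:ℝ) 1) : α := (h.symm ⟨t, ht⟩ : E)

lemma ptOf_mem (t : ℝ) (ht : t ∈ Set.Ioo (0:ℝ) 1) : ptOf h t ht ∈ E :=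
  (h.symm ⟨t, ht⟩).2

lemma coord_ptOf (t : ℝ) (ht : t ∈ Set.Ioo (0:ℝ) 1) (hm : ptOf h t ht ∈ E) :
    (h ⟨ptOf h t ht, hm⟩).1 = t := by
  have : (⟨ptOf h t ht, hm⟩ : E) = h.symm ⟨t, ht⟩ := Subtype.ext rfl
  rw [this, h.apply_symm_apply]

lemma ptOf_mem_seg_iff {J : Set ℝ} {t : ℝ} (ht : t ∈ Set.Ioo (0:ℝ) 1) :
    ptOf h t ht ∈ seg h J ↔ t ∈ J := by
  rw [mem_seg_iff]
  constructor
  · rintro ⟨hz, hJ⟩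
    rwa [coord_ptOf h t ht hz] at hJ
  · intro htJ
    exact ⟨ptOf_mem h t ht, by rwa [coord_ptOf]⟩

lemma coord_eq_imp_eq {z z' : α} (hz : z ∈ E) (hz' : z' ∈ E)
    (hc : (h ⟨z, hz⟩).1 = (h ⟨z', hz'⟩).1) : z = z' := by
  have : h ⟨z, hz⟩ = h ⟨z', hz'⟩ := Subtype.ext hc
  have := h.injective this
  exact congrArg Subtype.val this

lemma coord_flip {z : α} (hz : z ∈ E) :
    ((h.trans flipI) ⟨z, hz⟩).1 = 1 - (h ⟨z, hz⟩).1 := rfl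

lemma seg_flip (J : Set ℝ) : seg (h.trans flipI) J = seg h ((fun s => 1 - s) ⁻¹' J) := by
  ext z
  rw [mem_seg_iff, mem_seg_iff]
  constructor
  · rintro ⟨hz, hJ⟩
    rw [coord_flip h hz] at hJ
    exact ⟨hz, hJ⟩
  · rintro ⟨hz, hJ⟩
    exact ⟨hz, by rwa [coord_flip h hz]⟩

lemma seg_flip_Ioo {a b : ℝ} : seg (h.trans flipI) (Set.Ioo a b) = seg h (Set.Ioo (1-b) (1-a)) := by
  have hJ : ((fun s : ℝ => 1 - s) ⁻¹' Set.Ioo a b) = Set.Ioo (1-b) (1-a) := by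
    ext s
    simp only [Set.mem_preimage, Set.mem_Ioo]
    constructor
    · intro hs
      exact ⟨by linarith [hs.2], by linarith [hs.1]⟩
    · intro hs
      exact ⟨by linarith [hs.2], by linarith [hs.1]⟩
  rw [seg_flip, hJ]

/-- Compactness of a closed coordinate band. -/
lemma seg_compact {a b : ℝ} (ha : 0 < a) (hb : b < 1) :
    IsCompact (seg h (Set.Icc a b)) := by
  have hsub : Set.Icc a b ⊆ Set.Ioo (0:ℝ) 1 := fun s hs => ⟨lt_of_lt_of_le ha hs.1,
    lt_of_le_of_lt hs.2 hb⟩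
  have h1 : IsCompact ((fun x : (Set.Ioo (0:ℝ) 1) => x.1) ⁻¹' (Set.Icc a b)) := by
    apply IsInducing.subtypeVal.isCompact_preimage'
    · exact isCompact_Icc
    · rwa [Subtype.range_coe]
  exact (h1.image h.symm.continuous).image continuous_subtype_val

/-- A non-member limit point of `E` clusters at one of the two ends. -/
lemma end_cluster [T2Space α] {p : α} (hp : p ∈ closure E) (hpE : p ∉ E) :
    (∀ t, 0 < t → t < 1 → p ∈ closure (seg h (Set.Ioo 0 t))) ∨
    (∀ t, 0 < t → t < 1 → p ∈ closure (seg h (Set.Ioo t 1))) := by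
  by_contra hcon
  push_neg at hcon
  obtain ⟨⟨t₁, ht₁0, ht₁1, hp1⟩, ⟨t₂, ht₂0, ht₂1, hp2⟩⟩ := hcon
  set a := t₁/2 with ha
  set b := (t₂+1)/2 with hb
  have hK : IsCompact (seg h (Set.Icc a b)) := seg_compact h (by linarith) (by linarith)
  have hcover : E ⊆ seg h (Set.Ioo 0 t₁) ∪ (seg h (Set.Icc a b) ∪ seg h (Set.Ioo t₂ 1)) := by
    intro z hz
    rcases lt_or_ge (h ⟨z, hz⟩).1 t₁ with hlt | hge
    · exact Or.inl (mem_seg_iff h |>.mpr ⟨hz, ⟨(h ⟨z, hz⟩).2.1, hlt⟩⟩)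
    rcases lt_or_ge t₂ (h ⟨z, hz⟩).1 with hgt | hle
    · exact Or.inr (Or.inr ((mem_seg_iff h).mpr ⟨hz, ⟨hgt, (h ⟨z, hz⟩).2.2⟩⟩))
    · refine Or.inr (Or.inl ((mem_seg_iff h).mpr ⟨hz, ⟨by linarith, by linarith⟩⟩))
  have hcl : closure E ⊆ closure (seg h (Set.Ioo 0 t₁)) ∪
      (seg h (Set.Icc a b) ∪ closure (seg h (Set.Ioo t₂ 1))) := by
    have h2 := closure_mono hcover
    rwa [closure_union, closure_union, IsClosed.closure_eq hK.isClosed] at h2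
  rcases hcl hp with h1 | h2 | h3
  · exact hp1 h1
  · exact hpE (seg_subset h _ h2)
  · exact hp2 h3

end Seg

/-! ### Edges -/

section Edges

variable (M : MeasuredTree)

lemma isOpen_vcompl : IsOpen ((M.vertices : Set M.carrier))ᶜ :=
  (M.vertices.finite_toSet.isClosed).isOpen_compl

lemma vertex_separation {w w' : M.carrier}
    (hw : w ∈ ((M.vertices : Set M.carrier))ᶜ) (hw' : w' ∈ ((M.vertices : Set M.carrier))ᶜ)
    (hne : connectedComponentIn ((M.vertices : Set M.carrier))ᶜ w ≠
      connectedComponentIn ((M.vertices : Set M.carrier))ᶜ w') :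
    ∃ v ∈ M.vertices, connectedComponentIn {v}ᶜ w ≠ connectedComponentIn {v}ᶜ w' := by
  have hnsub : ¬ (arcSet M w w' ⊆ ((M.vertices : Set M.carrier))ᶜ) := by
    intro hsub
    apply hne
    apply connectedComponentIn_eq
    exact (arcSet_preconnected M w w').subset_connectedComponentIn
      (left_mem_arcSet M w w') hsub (right_mem_arcSet M w w')
  rw [Set.not_subset] at hnsub
  obtain ⟨v, hvarc, hvV⟩ := hnsub
  simp only [mem_compl_iff, not_not] at hvV
  refine ⟨v, hvV, ?_⟩
  intro heq
  have hwv : w ∈ ({v} : Set M.carrier)ᶜ := by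
    simp only [mem_compl_iff, mem_singleton_iff]
    rintro rfl; exact hw hvV
  have hw'v : w' ∈ ({v} : Set M.carrier)ᶜ := by
    simp only [mem_compl_iff, mem_singleton_iff]
    rintro rfl; exact hw' hvV
  have hmem : w' ∈ connectedComponentIn {v}ᶜ w := heq ▸ mem_connectedComponentIn hw'v
  have harc : arcSet M w w' ⊆ connectedComponentIn {v}ᶜ w :=
    arcSet_min M isPreconnected_connectedComponentIn (mem_connectedComponentIn hwv) hmem
  exact (connectedComponentIn_subset _ _ (harc hvarc)) rfl

lemma edges_finite :
    {C : Set M.carrier | ∃ w ∈ ((M.vertices : Set M.carrier))ᶜ,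
      C = connectedComponentIn ((M.vertices : Set M.carrier))ᶜ w}.Finite := by
  classical
  set Vc := ((M.vertices : Set M.carrier))ᶜ with hVc
  set f : Set M.carrier → (M.vertices → Set M.carrier) := fun C v =>
    if h : ∃ w, w ∈ Vc ∧ connectedComponentIn Vc w = C then
      connectedComponentIn {(v : M.carrier)}ᶜ h.choose else ∅ with hf
  have himg : (f '' {C : Set M.carrier | ∃ w ∈ Vc, C = connectedComponentIn Vc w}).Finite := by
    refine (Set.Finite.pi (t := fun v : M.vertices =>
      {C : Set M.carrier | ∃ y : M.carrier, y ≠ (v : M.carrier) ∧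
        C = connectedComponentIn {(v : M.carrier)}ᶜ y})
      (fun v => M.finiteComponents (v : M.carrier))).subset ?_
    rintro _ ⟨C, ⟨w, hwv, rfl⟩, rfl⟩
    rw [Set.mem_pi]
    intro v _
    have hex : ∃ u, u ∈ Vc ∧ connectedComponentIn Vc u = connectedComponentIn Vc w :=
      ⟨w, hwv, rfl⟩
    simp only [hf, dif_pos hex]
    refine ⟨hex.choose, ?_, rfl⟩
    intro hveq
    exact hex.choose_spec.1 (hveq ▸ v.2)
  refine Set.Finite.of_finite_image himg ?_
  rintro C hC C' hC' heq
  by_contra hne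
  obtain ⟨w, hwv, hCw⟩ := hC
  obtain ⟨w', hw'v, hC'w⟩ := hC'
  have hex : ∃ u, u ∈ Vc ∧ connectedComponentIn Vc u = C := ⟨w, hwv, hCw.symm⟩
  have hex' : ∃ u, u ∈ Vc ∧ connectedComponentIn Vc u = C' := ⟨w', hw'v, hC'w.symm⟩
  obtain ⟨v, hvV, hvne⟩ := vertex_separation M hex.choose_spec.1 hex'.choose_spec.1
    (by rw [hex.choose_spec.2, hex'.choose_spec.2]; exact hne)
  apply hvne
  have h1 : f C ⟨v, hvV⟩ = connectedComponentIn {v}ᶜ hex.choose := by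
    simp only [hf, dif_pos hex]
  have h2 : f C' ⟨v, hvV⟩ = connectedComponentIn {v}ᶜ hex'.choose := by
    simp only [hf, dif_pos hex']
  rw [← h1, ← h2, heq]

lemma isOpen_edge (w : M.carrier) :
    IsOpen (connectedComponentIn ((M.vertices : Set M.carrier))ᶜ w) := by
  refine open_components M (isOpen_vcompl M) ?_ w
  exact edges_finite M

lemma closure_edge_subset (w : M.carrier) :
    closure (connectedComponentIn ((M.vertices : Set M.carrier))ᶜ w) ⊆
      connectedComponentIn ((M.vertices : Set M.carrier))ᶜ w ∪ (M.vertices : Set M.carrier) := by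
  intro z hz
  by_contra hzm
  rw [mem_union] at hzm
  push_neg at hzm
  obtain ⟨hz1, hz2⟩ := hzm
  have hzopen : IsOpen (connectedComponentIn ((M.vertices : Set M.carrier))ᶜ z) :=
    isOpen_edge M z
  have hzmem : z ∈ connectedComponentIn ((M.vertices : Set M.carrier))ᶜ z :=
    mem_connectedComponentIn hz2
  obtain ⟨u, hu1, hu2⟩ := mem_closure_iff.mp hz _ hzopen hzmem
  exact hz1 ((eq_of_mem_compIn M hu2 hu1) ▸ hzmem)

/-- Separation along an edge: a preconnected set containing points on both sides of `yy`
must contain `yy`. -/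
lemma sep {E : Set M.carrier} (h : E ≃ₜ (Set.Ioo (0:ℝ) 1))
    {A : Set M.carrier} (hA : IsPreconnected A)
    {u v yy : M.carrier} (hu : u ∈ E) (hv : v ∈ E) (hy : yy ∈ E)
    (hAu : u ∈ A) (hAv : v ∈ A)
    (h1 : (h ⟨u, hu⟩).1 < (h ⟨yy, hy⟩).1) (h2 : (h ⟨yy, hy⟩).1 < (h ⟨v, hv⟩).1) :
    yy ∈ A := by
  set su := (h ⟨u, hu⟩).1 with hsu
  set sv := (h ⟨v, hv⟩).1 with hsv
  set t := (h ⟨yy, hy⟩).1 with ht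
  have hsuI : su ∈ Set.Ioo (0:ℝ) 1 := (h ⟨u, hu⟩).2
  have hsvI : sv ∈ Set.Ioo (0:ℝ) 1 := (h ⟨v, hv⟩).2
  have hIcc : Set.Icc su sv ⊆ Set.Ioo (0:ℝ) 1 := fun s hs =>
    ⟨lt_of_lt_of_le hsuI.1 hs.1, lt_of_le_of_lt hs.2 hsvI.2⟩
  have hMpre : IsPreconnected (seg h (Set.Icc su sv)) :=
    seg_preconnected h isPreconnected_Icc hIcc
  have huM : u ∈ seg h (Set.Icc su sv) :=
    (mem_seg_iff h).mpr ⟨hu, ⟨le_refl _, le_of_lt (lt_trans h1 h2)⟩⟩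
  have hvM : v ∈ seg h (Set.Icc su sv) :=
    (mem_seg_iff h).mpr ⟨hv, ⟨le_of_lt (lt_trans h1 h2), le_refl _⟩⟩
  have harc : arcSet M u v ⊆ seg h (Set.Icc su sv) := arcSet_min M hMpre huM hvM
  have harcE : arcSet M u v ⊆ E := harc.trans (seg_subset h _)
  -- pass to coordinates
  have hpre0 : IsPreconnected ((Subtype.val : E → M.carrier) ⁻¹' (arcSet M u v)) := by
    refine IsInducing.subtypeVal.isPreconnected_image.mp ?_
    rw [Subtype.image_preimage_coe, inter_eq_right.mpr harcE]
    exact arcSet_preconnected M u v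
  set J := (fun a : (Set.Ioo (0:ℝ) 1) => a.1) ''
    (⇑h '' ((Subtype.val : E → M.carrier) ⁻¹' (arcSet M u v))) with hJ
  have hJpre : IsPreconnected J :=
    ((hpre0.image _ h.continuous.continuousOn).image _ continuous_subtype_val.continuousOn)
  have hsuJ : su ∈ J := ⟨h ⟨u, hu⟩, ⟨⟨u, hu⟩, left_mem_arcSet M u v, rfl⟩, rfl⟩
  have hsvJ : sv ∈ J := ⟨h ⟨v, hv⟩, ⟨⟨v, hv⟩, right_mem_arcSet M u v, rfl⟩, rfl⟩
  have htJ : t ∈ J := hJpre.ordConnected.out hsuJ hsvJ ⟨le_of_lt h1, le_of_lt h2⟩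
  obtain ⟨b, ⟨e, he, rfl⟩, hb⟩ := htJ
  have heq : h e = h ⟨yy, hy⟩ := Subtype.ext hb
  have : e = ⟨yy, hy⟩ := h.injective heq
  have hyyarc : yy ∈ arcSet M u v := by
    rw [this] at he
    exact he
  exact arcSet_min M hA hAu hAv hyyarc

end Edges

/-! ### The key shrinking argument -/

section Key

variable (M : MeasuredTree)

lemma key_core (p : M.carrier) {C : Set M.carrier} (hCopen : IsOpen C)
    (hCpre : IsPreconnected C) (hpC : p ∉ C)
    (hCcomp : ∀ z ∈ C, C = connectedComponentIn {p}ᶜ z)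
    (hheavy : 1 / 2 < M.μ C)
    {E : Set M.carrier} (h : E ≃ₜ (Set.Ioo (0:ℝ) 1))
    (a : ℝ) (ha0 : 0 ≤ a) (ha1 : a < 1)
    (H1 : ∀ t (ht : t ∈ Set.Ioo (0:ℝ) 1), a < t → ptOf h t ht ∈ C)
    (H2 : ∀ t, a < t → t < 1 → p ∈ closure (seg h (Set.Ioo a t)))
    (H3 : ∀ z ∈ C, (arcSet M p z ∩ seg h (Set.Ioo a 1)).Nonempty)
    (hcontra : ∀ y ∈ C, 1 / 2 < M.μ (connectedComponentIn {y}ᶜ p)) : False := by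
  have hIoo : ∀ {t : ℝ}, a < t → t < 1 → t ∈ Set.Ioo (0:ℝ) 1 :=
    fun h1 h2 => ⟨lt_of_le_of_lt ha0 h1, h2⟩
  -- p is in each component
  have hpyt : ∀ t (ht : t ∈ Set.Ioo (0:ℝ) 1), a < t → p ∈ ({ptOf h t ht} : Set M.carrier)ᶜ := by
    intro t ht h1
    simp only [mem_compl_iff, mem_singleton_iff]
    intro hp
    exact hpC (hp ▸ H1 t ht h1)
  have hpD : ∀ t (ht : t ∈ Set.Ioo (0:ℝ) 1), a < t →
      p ∈ connectedComponentIn {ptOf h t ht}ᶜ p := by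
    intro t ht h1
    exact mem_connectedComponentIn (hpyt t ht h1)
  -- the lower part is in the component of p
  have hLD : ∀ t (ht : t ∈ Set.Ioo (0:ℝ) 1), a < t →
      seg h (Set.Ioo a t) ⊆ connectedComponentIn {ptOf h t ht}ᶜ p := by
    intro t ht h1
    have hIsub : Set.Ioo a t ⊆ Set.Ioo (0:ℝ) 1 :=
      fun s hs => ⟨lt_of_le_of_lt ha0 hs.1, lt_trans hs.2 ht.2⟩
    have hsegpre : IsPreconnected (seg h (Set.Ioo a t)) :=
      seg_preconnected h isPreconnected_Ioo hIsub
    have hLpre : IsPreconnected (seg h (Set.Ioo a t) ∪ {p}) := by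
      apply hsegpre.subset_closure subset_union_left
      apply union_subset subset_closure
      intro z hz
      rw [mem_singleton_iff] at hz
      exact hz ▸ H2 t h1 ht.2
    have hLsub : seg h (Set.Ioo a t) ∪ {p} ⊆ ({ptOf h t ht} : Set M.carrier)ᶜ := by
      apply union_subset
      · intro z hz
        simp only [mem_compl_iff, mem_singleton_iff]
        rintro rfl
        rw [ptOf_mem_seg_iff h ht] at hz
        exact lt_irrefl t hz.2
      · intro z hz
        rw [mem_singleton_iff] at hz
        exact hz ▸ hpyt t ht h1
    exact subset_trans subset_union_left
      (hLpre.subset_connectedComponentIn (Or.inr rfl) hLsub)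
  -- the upper part avoids the component of p
  have hUD : ∀ t (ht : t ∈ Set.Ioo (0:ℝ) 1), a < t →
      ∀ z ∈ seg h (Set.Ioo t 1), z ∉ connectedComponentIn {ptOf h t ht}ᶜ p := by
    intro t ht h1 z hz hzD
    obtain ⟨hzE, hzc⟩ := (mem_seg_iff h).mp hz
    have hmidI : (a + t)/2 ∈ Set.Ioo (0:ℝ) 1 :=
      ⟨by rcases hIoo h1 ht.2 with ⟨h2, h3⟩; linarith, by rcases ht with ⟨h2, h3⟩; linarith⟩
    have humem : ptOf h ((a+t)/2) hmidI ∈ seg h (Set.Ioo a t) :=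
      (ptOf_mem_seg_iff h hmidI).mpr ⟨by linarith, by linarith⟩
    have huD := hLD t ht h1 humem
    have hyy := sep M h isPreconnected_connectedComponentIn
      (ptOf_mem h ((a+t)/2) hmidI) hzE (ptOf_mem h t ht) huD hzD
      (by rw [coord_ptOf, coord_ptOf]; linarith)
      (by rw [coord_ptOf]; exact hzc.1)
    exact (connectedComponentIn_subset _ _ hyy) rfl
  -- monotonicity
  have hmono : ∀ t t' (ht : t ∈ Set.Ioo (0:ℝ) 1) (ht' : t' ∈ Set.Ioo (0:ℝ) 1),
      a < t → t ≤ t' → connectedComponentIn {ptOf h t ht}ᶜ p ⊆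
        connectedComponentIn {ptOf h t' ht'}ᶜ p := by
    intro t t' ht ht' h1 hle
    rcases eq_or_lt_of_le hle with rfl | hlt
    · exact le_refl _
    have hnear : ptOf h t' ht' ∈ seg h (Set.Ioo t 1) :=
      (ptOf_mem_seg_iff h ht').mpr ⟨hlt, ht'.2⟩
    have hnotin := hUD t ht h1 _ hnear
    apply IsPreconnected.subset_connectedComponentIn isPreconnected_connectedComponentIn
      (hpD t ht h1)
    intro z hzD
    simp only [mem_compl_iff, mem_singleton_iff]
    rintro rfl
    exact hnotin hzD
  -- every point of C is eventually cut off
  have hempty : ∀ z ∈ C, ∃ t, ∃ (ht : t ∈ Set.Ioo (0:ℝ) 1), a < t ∧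
      z ∉ connectedComponentIn {ptOf h t ht}ᶜ p := by
    intro z hzC
    by_contra hzall
    push_neg at hzall
    obtain ⟨g, hgarc, hgseg⟩ := H3 z hzC
    obtain ⟨hgE, hgc⟩ := (mem_seg_iff h).mp hgseg
    set s := (h ⟨g, hgE⟩).1 with hs
    have hsI : s ∈ Set.Ioo (0:ℝ) 1 := (h ⟨g, hgE⟩).2
    have hgeq : g = ptOf h s hsI :=
      coord_eq_imp_eq h hgE (ptOf_mem h s hsI) (by rw [coord_ptOf])
    have hzD : z ∈ connectedComponentIn {ptOf h s hsI}ᶜ p := hzall s hsI hgc.1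
    have harc : arcSet M p z ⊆ connectedComponentIn {ptOf h s hsI}ᶜ p :=
      arcSet_min M isPreconnected_connectedComponentIn (hpD s hsI hgc.1) hzD
    have : g ∈ ({ptOf h s hsI} : Set M.carrier)ᶜ :=
      connectedComponentIn_subset _ _ (harc hgarc)
    exact this (by rw [← hgeq] at *; exact hgeq ▸ rfl)
  -- the shrinking sequence
  set tseq : ℕ → ℝ := fun n => a + (1 - a) / (n + 2) with htseq
  have htpos : ∀ n : ℕ, (0:ℝ) < (n:ℝ) + 2 := fun n => by positivity
  have htgt : ∀ n, a < tseq n := by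
    intro n
    have : (0:ℝ) < (1 - a)/(n + 2) := div_pos (by linarith) (htpos n)
    simp only [htseq]; linarith
  have htlt : ∀ n, tseq n < 1 := by
    intro n
    have h2 : (1 - a)/(n + 2) < (1 - a) := by
      apply div_lt_self (by linarith)
      have := htpos n
      linarith
    simp only [htseq]; linarith
  have htI : ∀ n, tseq n ∈ Set.Ioo (0:ℝ) 1 := fun n => hIoo (htgt n) (htlt n)
  have htanti : ∀ m n : ℕ, m ≤ n → tseq n ≤ tseq m := by
    intro m n hmn
    have h1 : (m:ℝ) + 2 ≤ (n:ℝ) + 2 := by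
      have : (m:ℝ) ≤ n := Nat.cast_le.mpr hmn
      linarith
    have := div_le_div_of_nonneg_left (by linarith : (0:ℝ) ≤ 1 - a) (htpos m) h1
    simp only [htseq]
    linarith
  set Dseq : ℕ → Set M.carrier :=
    fun n => connectedComponentIn {ptOf h (tseq n) (htI n)}ᶜ p ∩ C with hDseq
  have hDanti : Antitone Dseq := by
    intro m n hmn
    exact inter_subset_inter_left C
      (hmono (tseq n) (tseq m) (htI n) (htI m) (htgt n) (htanti m n hmn))
  have hInterEmpty : ⋂ n, Dseq n = ∅ := by
    rw [Set.eq_empty_iff_forall_notMem]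
    intro z hzall
    rw [mem_iInter] at hzall
    have hzC : z ∈ C := (hzall 0).2
    obtain ⟨t, ht, hat, hzn⟩ := hempty z hzC
    obtain ⟨n, hn⟩ := exists_nat_ge ((1 - a) / (t - a))
    have htan : tseq n ≤ t := by
      have hta : (0:ℝ) < t - a := by linarith
      have h2 : (1 - a) / (t - a) ≤ (n:ℝ) + 2 := by linarith
      have h3 : (1 - a) ≤ ((n:ℝ) + 2) * (t - a) := by
        rw [div_le_iff₀ hta] at h2
        linarith [h2]
      have h4 : (1 - a) / ((n:ℝ) + 2) ≤ t - a := by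
        rw [div_le_iff₀ (htpos n)]
        calc (1:ℝ) - a ≤ ((n:ℝ) + 2) * (t - a) := h3
        _ = (t - a) * ((n:ℝ) + 2) := by ring
      simp only [htseq]
      linarith
    exact hzn (hmono (tseq n) t (htI n) ht (htgt n) htan (hzall n).1)
  have hDmeas : ∀ n, MeasureTheory.NullMeasurableSet (Dseq n) M.μ :=
    fun n => (((isOpen_compIn M _ p).inter hCopen).measurableSet).nullMeasurableSet
  have htendsto : Tendsto (fun n => M.μ (Dseq n)) atTop (𝓝 0) := by
    have := MeasureTheory.tendsto_measure_iInter_atTop hDmeas hDanti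
      ⟨0, MeasureTheory.measure_ne_top _ _⟩
    rw [hInterEmpty] at this
    simpa [Function.comp_def] using this
  -- measure bound
  have hCmeas : MeasurableSet C := hCopen.measurableSet
  have hCcompl : M.μ Cᶜ = 1 - M.μ C := by
    rw [MeasureTheory.measure_compl hCmeas (MeasureTheory.measure_ne_top _ _),
      MeasureTheory.measure_univ]
  have hbound : ∀ n, 1 / 2 < M.μ Cᶜ + M.μ (Dseq n) := by
    intro n
    have hyC : ptOf h (tseq n) (htI n) ∈ C := H1 (tseq n) (htI n) (htgt n)
    have hlt := hcontra _ hyC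
    refine lt_of_lt_of_le hlt ?_
    refine le_trans (MeasureTheory.measure_mono ?_) (MeasureTheory.measure_union_le _ _)
    intro z hz
    by_cases hzC : z ∈ C
    · exact Or.inr ⟨hz, hzC⟩
    · exact Or.inl hzC
  have hlim : Tendsto (fun n => M.μ Cᶜ + M.μ (Dseq n)) atTop (𝓝 (M.μ Cᶜ + 0)) :=
    tendsto_const_nhds.add htendsto
  have hle : 1 / 2 ≤ M.μ Cᶜ + 0 :=
    ge_of_tendsto' hlim (fun n => le_of_lt (hbound n))
  rw [add_zero, hCcompl] at hle
  have hC1 : M.μ C ≤ 1 := (MeasureTheory.measure_mono (subset_univ C)).trans_eq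
    MeasureTheory.measure_univ
  have hsum : 1 / 2 + M.μ C ≤ 1 := by
    calc 1 / 2 + M.μ C ≤ (1 - M.μ C) + M.μ C := add_le_add_left hle _
    _ = 1 := tsub_add_cancel_of_le hC1
  have h12 : (1:ENNReal) - 1/2 = 1/2 := ENNReal.sub_half (by norm_num)
  have hfin : M.μ C ≤ 1/2 := by
    have := ENNReal.le_sub_of_add_le_left (by norm_num : (1/2 : ENNReal) ≠ ⊤) hsum
    rwa [h12] at this
  exact absurd hheavy (not_lt.mpr hfin)

/-- Case A auxiliary: `p` is interior to an edge `E`, `q ∈ C ∩ E` on the upper side. -/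
lemma keyA_aux (p : M.carrier) {C : Set M.carrier} (hCopen : IsOpen C)
    (hCpre : IsPreconnected C) (hpC : p ∉ C)
    (hCcomp : ∀ z ∈ C, C = connectedComponentIn {p}ᶜ z)
    (hGsub : ∀ z ∈ C, arcSet M p z ⊆ C ∪ {p})
    (hheavy : 1 / 2 < M.μ C)
    {E : Set M.carrier} (hEopen : IsOpen E) (h : E ≃ₜ (Set.Ioo (0:ℝ) 1))
    (hpE : p ∈ E) {q : M.carrier} (hqE : q ∈ E) (hqC : q ∈ C)
    (hlt : (h ⟨p, hpE⟩).1 < (h ⟨q, hqE⟩).1)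
    (hcontra : ∀ y ∈ C, 1 / 2 < M.μ (connectedComponentIn {y}ᶜ p)) : False := by
  set a := (h ⟨p, hpE⟩).1 with ha
  have haI : a ∈ Set.Ioo (0:ℝ) 1 := (h ⟨p, hpE⟩).2
  have ha0 : (0:ℝ) ≤ a := le_of_lt haI.1
  have ha1 : a < 1 := haI.2
  have hIsub : Set.Ioo a 1 ⊆ Set.Ioo (0:ℝ) 1 := fun s hs => ⟨lt_trans haI.1 hs.1, hs.2⟩
  -- the upper half is contained in C
  have hSsub : seg h (Set.Ioo a 1) ⊆ ({p} : Set M.carrier)ᶜ := by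
    intro z hz
    simp only [mem_compl_iff, mem_singleton_iff]
    rintro rfl
    obtain ⟨hzE, hzc⟩ := (mem_seg_iff h).mp hz
    have : (h ⟨z, hzE⟩).1 = a := rfl
    rw [this] at hzc
    exact lt_irrefl a hzc.1
  have hsegC : seg h (Set.Ioo a 1) ⊆ C := by
    have hSpre : IsPreconnected (seg h (Set.Ioo a 1)) :=
      seg_preconnected h isPreconnected_Ioo hIsub
    have hqS : q ∈ seg h (Set.Ioo a 1) :=
      (mem_seg_iff h).mpr ⟨hqE, ⟨hlt, (h ⟨q, hqE⟩).2.2⟩⟩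
    rw [hCcomp q hqC]
    exact hSpre.subset_connectedComponentIn hqS hSsub
  -- hypotheses of key_core
  have H1 : ∀ t (ht : t ∈ Set.Ioo (0:ℝ) 1), a < t → ptOf h t ht ∈ C := by
    intro t ht hat
    exact hsegC ((ptOf_mem_seg_iff h ht).mpr ⟨hat, ht.2⟩)
  have H2 : ∀ t, a < t → t < 1 → p ∈ closure (seg h (Set.Ioo a t)) := by
    intro t hat ht1
    rw [mem_closure_iff]
    intro O hO hpO
    have hpreO : IsOpen ((Subtype.val : E → M.carrier) ⁻¹' O) :=
      hO.preimage continuous_subtype_val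
    have hWopen : IsOpen (⇑h.symm ⁻¹' ((Subtype.val : E → M.carrier) ⁻¹' O)) :=
      hpreO.preimage h.symm.continuous
    obtain ⟨W', hW'open, hWeq⟩ := isOpen_induced_iff.mp hWopen
    have hpW : h ⟨p, hpE⟩ ∈ ⇑h.symm ⁻¹' ((Subtype.val : E → M.carrier) ⁻¹' O) := by
      simp only [Set.mem_preimage, h.symm_apply_apply]
      exact hpO
    have haW' : a ∈ W' := by
      rw [← hWeq] at hpW
      exact hpW
    obtain ⟨ε, hε, hball⟩ := Metric.isOpen_iff.mp hW'open a haW'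
    set s := a + min ε (t - a) / 2 with hs
    have hmin : (0:ℝ) < min ε (t - a) := lt_min hε (by linarith)
    have has : a < s := by simp only [hs]; linarith
    have hst : s < t := by
      have h5 : min ε (t - a) ≤ t - a := min_le_right _ _
      simp only [hs]; linarith
    have hsI : s ∈ Set.Ioo (0:ℝ) 1 := ⟨lt_of_le_of_lt ha0 has, lt_trans hst ht1⟩
    have hsW' : s ∈ W' := by
      apply hball
      rw [Metric.mem_ball, Real.dist_eq]
      have h5 : min ε (t - a) ≤ ε := min_le_left _ _
      have h6 : s - a = min ε (t - a) / 2 := by simp only [hs]; ring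
      rw [abs_of_pos (by linarith : (0:ℝ) < s - a), h6]
      calc min ε (t - a) / 2 < min ε (t - a) := half_lt_self hmin
      _ ≤ ε := h5
    have hsW : (⟨s, hsI⟩ : Set.Ioo (0:ℝ) 1) ∈
        ⇑h.symm ⁻¹' ((Subtype.val : E → M.carrier) ⁻¹' O) := by
      rw [← hWeq]
      exact hsW'
    exact ⟨ptOf h s hsI, hsW, (ptOf_mem_seg_iff h hsI).mpr ⟨has, hst⟩⟩
  have H3 : ∀ z ∈ C, (arcSet M p z ∩ seg h (Set.Ioo a 1)).Nonempty := by
    intro z hzC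
    by_contra hemp
    rw [Set.not_nonempty_iff_eq_empty] at hemp
    have hGE : ∀ g ∈ arcSet M p z, g ∈ E → g = p := by
      intro g hg hgE
      by_contra hne
      have hgC : g ∈ C := by
        rcases hGsub z hzC hg with hgC | hgp
        · exact hgC
        · exact absurd hgp hne
      rcases lt_trichotomy ((h ⟨g, hgE⟩).1) a with hlt' | heq' | hgt'
      · -- g on lower side: C would contain p by separation
        exact hpC (sep M h hCpre hgE hqE hpE hgC hqC hlt' hlt)
      · exact hne (coord_eq_imp_eq h hgE hpE heq')
      · have : g ∈ seg h (Set.Ioo a 1) :=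
          (mem_seg_iff h).mpr ⟨hgE, ⟨hgt', (h ⟨g, hgE⟩).2.2⟩⟩
        have : g ∈ arcSet M p z ∩ seg h (Set.Ioo a 1) := ⟨hg, this⟩
        rw [hemp] at this
        exact this
    have hzp : z ≠ p := fun hzp => hpC (hzp ▸ hzC)
    obtain ⟨g, hgarc, hgE, hgp⟩ := (arcSet_preconnected M p z) E ({p} : Set M.carrier)ᶜ
      hEopen isOpen_compl_singleton
      (fun g hg => by
        by_cases hgeq : g = p
        · exact Or.inl (hgeq ▸ hpE)
        · exact Or.inr hgeq)
      ⟨p, left_mem_arcSet M p z, hpE⟩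
      ⟨z, right_mem_arcSet M p z, hzp⟩
    exact hgp (hGE g hgarc hgE)
  exact key_core M p hCopen hCpre hpC hCcomp hheavy h a ha0 ha1 H1 H2 H3 hcontra

/-- A limit point of `S` is in `S` or clusters on `S ∩ E` for some edge `E`. -/
lemma closure_decomp {S : Set M.carrier} {p : M.carrier} (hp : p ∈ closure S) :
    p ∈ S ∨ ∃ w, w ∉ M.vertices ∧
      p ∈ closure (S ∩ connectedComponentIn ((M.vertices : Set M.carrier))ᶜ w) := by
  classical
  set Vc := ((M.vertices : Set M.carrier))ᶜ with hVc
  set 𝒢 : Set (Set M.carrier) :=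
    insert (S ∩ (M.vertices : Set M.carrier))
      ((fun E => S ∩ E) '' {C : Set M.carrier | ∃ w ∈ Vc, C = connectedComponentIn Vc w})
    with h𝒢
  have h𝒢fin : 𝒢.Finite := ((edges_finite M).image _).insert _
  have hSsub : S = ⋃₀ 𝒢 := by
    apply Subset.antisymm
    · intro z hz
      by_cases hzV : z ∈ (M.vertices : Set M.carrier)
      · exact ⟨_, mem_insert _ _, hz, hzV⟩
      · refine ⟨S ∩ connectedComponentIn Vc z, ?_, hz, mem_connectedComponentIn hzV⟩
        exact mem_insert_iff.mpr (Or.inr ⟨connectedComponentIn Vc z, ⟨z, hzV, rfl⟩, rfl⟩)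
    · intro z hz
      obtain ⟨s, hs𝒢, hzs⟩ := hz
      rcases mem_insert_iff.mp hs𝒢 with rfl | ⟨E, hE, rfl⟩
      · exact hzs.1
      · exact hzs.1
  rw [hSsub, sUnion_eq_biUnion, h𝒢fin.closure_biUnion] at hp
  rw [mem_iUnion₂] at hp
  obtain ⟨s, hs𝒢, hps⟩ := hp
  rcases mem_insert_iff.mp hs𝒢 with rfl | ⟨E, ⟨w, hwVc, rfl⟩, rfl⟩
  · left
    have hfin : (S ∩ (M.vertices : Set M.carrier)).Finite :=
      M.vertices.finite_toSet.subset inter_subset_right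
    rw [hfin.isClosed.closure_eq] at hps
    exact hps.1
  · right
    exact ⟨w, hwVc, hps⟩

/-- A non-member limit point of an edge clusters (after flipping) at the lower end. -/
lemma lower_cluster {w p : M.carrier} (hw : w ∉ M.vertices)
    (hpcl : p ∈ closure (connectedComponentIn ((M.vertices : Set M.carrier))ᶜ w))
    (hpE : p ∉ connectedComponentIn ((M.vertices : Set M.carrier))ᶜ w) :
    ∃ h : (connectedComponentIn ((M.vertices : Set M.carrier))ᶜ w) ≃ₜ (Set.Ioo (0:ℝ) 1),
      ∀ t, 0 < t → t < 1 → p ∈ closure (seg h (Set.Ioo 0 t)) := by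
  obtain ⟨h₀⟩ := M.edgeHomeo w hw
  rcases end_cluster h₀ hpcl hpE with hlow | hhigh
  · exact ⟨h₀, hlow⟩
  · refine ⟨h₀.trans flipI, ?_⟩
    intro t ht0 ht1
    rw [seg_flip_Ioo]
    have := hhigh (1 - t) (by linarith) (by linarith)
    rw [sub_zero]
    exact this

/-- Case B: `p` is a vertex. -/
lemma keyB (p : M.carrier) (hp : p ∈ M.vertices) {C : Set M.carrier} (hCopen : IsOpen C)
    (hCpre : IsPreconnected C) (hpC : p ∉ C) (hclosC : p ∈ closure C)
    (hCcomp : ∀ z ∈ C, C = connectedComponentIn {p}ᶜ z)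
    (hGsub : ∀ z ∈ C, arcSet M p z ⊆ C ∪ {p})
    (hheavy : 1 / 2 < M.μ C)
    (hcontra : ∀ y ∈ C, 1 / 2 < M.μ (connectedComponentIn {y}ᶜ p)) : False := by
  rcases closure_decomp M hclosC with hpC' | ⟨w, hw, hpcl⟩
  · exact hpC hpC'
  set Vc := ((M.vertices : Set M.carrier))ᶜ with hVc
  set E := connectedComponentIn Vc w with hE
  have hCEne : (C ∩ E).Nonempty := by
    by_contra hne
    rw [Set.not_nonempty_iff_eq_empty] at hne
    rw [hne, closure_empty] at hpcl
    exact hpcl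
  obtain ⟨c, hcC, hcE⟩ := hCEne
  have hEsub : ∀ {E' : Set M.carrier} {c' : M.carrier}, c' ∈ C → c' ∈ E' →
      (∃ w', w' ∉ M.vertices ∧ E' = connectedComponentIn Vc w') → E' ⊆ C := by
    rintro E' c' hc'C hc'E' ⟨w', hw', rfl⟩
    rw [hCcomp c' hc'C]
    apply IsPreconnected.subset_connectedComponentIn isPreconnected_connectedComponentIn hc'E'
    intro g hg
    have : g ∉ (M.vertices : Set M.carrier) := connectedComponentIn_subset _ _ hg
    simp only [mem_compl_iff, mem_singleton_iff]
    rintro rfl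
    exact this hp
  have hEC : E ⊆ C := hEsub hcC hcE ⟨w, hw, rfl⟩
  have hpE : p ∉ E := fun h' => hpC (hEC h')
  have hpclE : p ∈ closure E := closure_mono inter_subset_right hpcl
  obtain ⟨h, hcl⟩ := lower_cluster M hw hpclE hpE
  have H1 : ∀ t (ht : t ∈ Set.Ioo (0:ℝ) 1), (0:ℝ) < t → ptOf h t ht ∈ C :=
    fun t ht _ => hEC (ptOf_mem h t ht)
  have H2 : ∀ t, (0:ℝ) < t → t < 1 → p ∈ closure (seg h (Set.Ioo 0 t)) := hcl
  have H3 : ∀ z ∈ C, (arcSet M p z ∩ seg h (Set.Ioo 0 1)).Nonempty := by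
    intro z hzC
    rw [seg_univ h]
    by_contra hemp
    rw [Set.not_nonempty_iff_eq_empty] at hemp
    have hzp : z ≠ p := fun h' => hpC (h' ▸ hzC)
    -- p clusters on arc ∩ C
    have hclG : p ∈ closure (arcSet M p z ∩ C) := by
      by_contra hncl
      rw [mem_closure_iff] at hncl
      push_neg at hncl
      obtain ⟨O, hOopen, hpO, hOint⟩ := hncl
      obtain ⟨g, hgarc, hgO, hgp⟩ := (arcSet_preconnected M p z) O ({p} : Set M.carrier)ᶜ
        hOopen isOpen_compl_singleton
        (fun g _ => by
          by_cases hgeq : g = p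
          · exact Or.inl (hgeq ▸ hpO)
          · exact Or.inr hgeq)
        ⟨p, left_mem_arcSet M p z, hpO⟩ ⟨z, right_mem_arcSet M p z, hzp⟩
      have hgC : g ∈ C := by
        rcases hGsub z hzC hgarc with h' | h'
        · exact h'
        · exact absurd h' hgp
      have : g ∈ O ∩ (arcSet M p z ∩ C) := ⟨hgO, hgarc, hgC⟩
      rw [hOint] at this
      exact this
    rcases closure_decomp M hclG with hpG | ⟨w', hw', hpcl'⟩
    · exact hpC hpG.2
    set E' := connectedComponentIn Vc w' with hE'
    have hGE'ne : (arcSet M p z ∩ C ∩ E').Nonempty := by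
      by_contra hne
      rw [Set.not_nonempty_iff_eq_empty] at hne
      rw [hne, closure_empty] at hpcl'
      exact hpcl'
    obtain ⟨u', hu'G, hu'E'⟩ := hGE'ne
    by_cases hEE' : E' = E
    · have : u' ∈ arcSet M p z ∩ E := ⟨hu'G.1, hEE' ▸ hu'E'⟩
      rw [hemp] at this
      exact this
    · -- two distinct edges adjacent to p inside C: impossible
      have hE'C : E' ⊆ C := hEsub hu'G.2 hu'E' ⟨w', hw', rfl⟩
      have hpE' : p ∉ E' := fun h' => hpC (hE'C h')
      have hpclE' : p ∈ closure E' := closure_mono (inter_subset_right) hpcl'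
      obtain ⟨h', hcl'⟩ := lower_cluster M hw' hpclE' hpE'
      have h4I : (1/4 : ℝ) ∈ Set.Ioo (0:ℝ) 1 := by norm_num
      have hIsub2 : Set.Ioo (0:ℝ) (1/2) ⊆ Set.Ioo (0:ℝ) 1 :=
        fun s hs => ⟨hs.1, by linarith [hs.2]⟩
      set u := ptOf h (1/4) h4I with hu
      set u' := ptOf h' (1/4) h4I with hu'
      have hLupre : IsPreconnected (seg h (Set.Ioo 0 (1/2)) ∪ {p}) := by
        apply (seg_preconnected h isPreconnected_Ioo hIsub2).subset_closure subset_union_left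
        apply union_subset subset_closure
        intro g hg
        rw [mem_singleton_iff] at hg
        exact hg ▸ hcl (1/2) (by norm_num) (by norm_num)
      have hLu'pre : IsPreconnected (seg h' (Set.Ioo 0 (1/2)) ∪ {p}) := by
        apply (seg_preconnected h' isPreconnected_Ioo hIsub2).subset_closure subset_union_left
        apply union_subset subset_closure
        intro g hg
        rw [mem_singleton_iff] at hg
        exact hg ▸ hcl' (1/2) (by norm_num) (by norm_num)
      have hBpre : IsPreconnected ((seg h (Set.Ioo 0 (1/2)) ∪ {p}) ∪
          (seg h' (Set.Ioo 0 (1/2)) ∪ {p})) :=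
        IsPreconnected.union p (Or.inr rfl) (Or.inr rfl) hLupre hLu'pre
      have huB : u ∈ (seg h (Set.Ioo 0 (1/2)) ∪ {p}) ∪ (seg h' (Set.Ioo 0 (1/2)) ∪ {p}) :=
        Or.inl (Or.inl ((ptOf_mem_seg_iff h h4I).mpr ⟨by norm_num, by norm_num⟩))
      have hu'B : u' ∈ (seg h (Set.Ioo 0 (1/2)) ∪ {p}) ∪ (seg h' (Set.Ioo 0 (1/2)) ∪ {p}) :=
        Or.inr (Or.inl ((ptOf_mem_seg_iff h' h4I).mpr ⟨by norm_num, by norm_num⟩))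
      have harcB := arcSet_min M hBpre huB hu'B
      have harcC : arcSet M u u' ⊆ C :=
        arcSet_min M hCpre (hEC (ptOf_mem h (1/4) h4I)) (hE'C (ptOf_mem h' (1/4) h4I))
      have hparc : p ∉ arcSet M u u' := fun h'' => hpC (harcC h'')
      have hcover : arcSet M u u' ⊆ E ∪ E' := by
        intro g hg
        rcases harcB hg with (hg' | hg') | (hg' | hg')
        · exact Or.inl (seg_subset h _ hg')
        · rw [mem_singleton_iff] at hg'; exact absurd (hg' ▸ hg) hparc
        · exact Or.inr (seg_subset h' _ hg')
        · rw [mem_singleton_iff] at hg'; exact absurd (hg' ▸ hg) hparc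
      obtain ⟨g, hgarc, hgE, hgE'⟩ := (arcSet_preconnected M u u') E E'
        (isOpen_edge M w) (isOpen_edge M w') hcover
        ⟨u, left_mem_arcSet M u u', ptOf_mem h (1/4) h4I⟩
        ⟨u', right_mem_arcSet M u u', ptOf_mem h' (1/4) h4I⟩
      exact hEE' (eq_of_mem_compIn M hgE' hgE)
  exact key_core M p hCopen hCpre hpC hCcomp hheavy h 0 (le_refl 0) (by norm_num) H1 H2 H3 hcontra

/-- The key lemma: a heavy component cannot have all of its points seeing `p`'s side heavy. -/
lemma key (p : M.carrier) {y₀ : M.carrier} (hy₀ : y₀ ≠ p)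
    (hheavy : 1 / 2 < M.μ (connectedComponentIn {p}ᶜ y₀))
    (hcontra : ∀ y ∈ connectedComponentIn {p}ᶜ y₀,
      1 / 2 < M.μ (connectedComponentIn {y}ᶜ p)) : False := by
  set C := connectedComponentIn {p}ᶜ y₀ with hCdef
  have hCopen : IsOpen C := isOpen_compIn M p y₀
  have hCpre : IsPreconnected C := isPreconnected_connectedComponentIn
  have hpC : p ∉ C := fun h' => (connectedComponentIn_subset _ _ h') rfl
  have hCcomp : ∀ z ∈ C, C = connectedComponentIn {p}ᶜ z :=
    fun z hz => connectedComponentIn_eq hz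
  have hclosC : p ∈ closure C := mem_closure_compIn M hy₀
  have hCupPre : IsPreconnected (C ∪ {p}) := by
    apply hCpre.subset_closure subset_union_left
    apply union_subset subset_closure
    intro g hg
    rw [mem_singleton_iff] at hg
    exact hg ▸ hclosC
  have hGsub : ∀ z ∈ C, arcSet M p z ⊆ C ∪ {p} :=
    fun z hz => arcSet_min M hCupPre (Or.inr rfl) (Or.inl hz)
  by_cases hp : p ∈ M.vertices
  · exact keyB M p hp hCopen hCpre hpC hclosC hCcomp hGsub hheavy hcontra
  · -- p is interior to an edge
    set E := connectedComponentIn ((M.vertices : Set M.carrier))ᶜ p with hE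
    have hpE : p ∈ E := mem_connectedComponentIn hp
    have hEopen : IsOpen E := isOpen_edge M p
    obtain ⟨h₀⟩ := M.edgeHomeo p hp
    obtain ⟨q, hqE, hqC⟩ := mem_closure_iff.mp hclosC E hEopen hpE
    have hqp : q ≠ p := fun h' => hpC (h' ▸ hqC)
    have hcne : (h₀ ⟨p, hpE⟩).1 ≠ (h₀ ⟨q, hqE⟩).1 :=
      fun h' => hqp (coord_eq_imp_eq h₀ hqE hpE h'.symm)
    rcases lt_or_gt_of_ne hcne with hlt | hgt
    · exact keyA_aux M p hCopen hCpre hpC hCcomp hGsub hheavy hEopen h₀ hpE hqE hqC hlt hcontra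
    · refine keyA_aux M p hCopen hCpre hpC hCcomp hGsub hheavy hEopen (h₀.trans flipI)
        hpE hqE hqC ?_ hcontra
      rw [coord_flip h₀ hpE, coord_flip h₀ hqE]
      linarith

end Key

/-! ### Main results -/

section Main

variable (M : MeasuredTree)

lemma median_unique {x y : M.carrier} (hx : M.IsMedian x) (hy : M.IsMedian y) : x = y := by
  by_contra hne
  have hyx : y ≠ x := fun h' => hne h'.symm
  have hxy : x ≠ y := hne
  set C := connectedComponentIn {x}ᶜ y with hC
  set D := connectedComponentIn {y}ᶜ x with hD
  have hCle : M.μ C ≤ 1 / 2 := hx y hyx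
  have hDle : M.μ D ≤ 1 / 2 := hy x hxy
  have hyC : y ∈ C := mem_connectedComponentIn (by simpa using hyx)
  have hxD : x ∈ D := mem_connectedComponentIn (by simpa using hxy)
  have hxnC : x ∉ C := fun h' => (connectedComponentIn_subset _ _ h') rfl
  -- the complement of C is preconnected
  have hCrep : Cᶜ = ⋃₀ {S | ∃ z ∈ Cᶜ, S = connectedComponentIn {x}ᶜ z ∪ {x}} := by
    apply Subset.antisymm
    · intro z hz
      refine ⟨connectedComponentIn {x}ᶜ z ∪ {x}, ⟨z, hz, rfl⟩, ?_⟩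
      by_cases hzx : z = x
      · exact Or.inr (hzx ▸ rfl)
      · exact Or.inl (mem_connectedComponentIn (by simpa using hzx))
    · rintro g ⟨S, ⟨z, hz, rfl⟩, hgS⟩
      rcases hgS with hgK | hgx
      · intro hgC
        apply hz
        have heq : connectedComponentIn {x}ᶜ z = C := eq_of_mem_compIn M hgK hgC
        have hzne : z ∈ ({x} : Set M.carrier)ᶜ :=
          connectedComponentIn_nonempty_iff.mp ⟨g, hgK⟩
        exact heq ▸ mem_connectedComponentIn hzne
      · rw [mem_singleton_iff] at hgx
        exact hgx ▸ hxnC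
  have hCcpre : IsPreconnected (Cᶜ : Set M.carrier) := by
    rw [hCrep]
    refine isPreconnected_sUnion x _ ?_ ?_
    · rintro S ⟨z, hz, rfl⟩
      exact Or.inr rfl
    · rintro S ⟨z, hz, rfl⟩
      by_cases hzx : z ∈ ({x} : Set M.carrier)ᶜ
      · apply IsPreconnected.subset_closure isPreconnected_connectedComponentIn
          subset_union_left
        apply union_subset subset_closure
        intro g hg
        rw [mem_singleton_iff] at hg
        subst hg
        exact mem_closure_compIn M (by simpa using hzx)
      · rw [connectedComponentIn_eq_empty hzx, empty_union]
        exact isPreconnected_singleton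
  have hCsub : (Cᶜ : Set M.carrier) ⊆ D := by
    apply hCcpre.subset_connectedComponentIn hxnC
    intro g hg
    simp only [mem_compl_iff, mem_singleton_iff]
    rintro rfl
    exact hg hyC
  have hDCne : (D ∩ C).Nonempty :=
    mem_closure_iff.mp (mem_closure_compIn M hyx) D (isOpen_compIn M y x) hxD
  have hDCopen : IsOpen (D ∩ C) := (isOpen_compIn M y x).inter (isOpen_compIn M x y)
  have hpos : 0 < M.μ (D ∩ C) := M.openPos _ hDCopen hDCne
  have hdisj : Disjoint (Cᶜ : Set M.carrier) (D ∩ C) :=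
    disjoint_compl_left.mono_right inter_subset_right
  have hunion : M.μ (Cᶜ ∪ (D ∩ C)) = M.μ Cᶜ + M.μ (D ∩ C) :=
    MeasureTheory.measure_union hdisj hDCopen.measurableSet
  have hsub : Cᶜ ∪ (D ∩ C) ⊆ D := union_subset hCsub inter_subset_left
  have hCc : M.μ Cᶜ = 1 - M.μ C := by
    rw [MeasureTheory.measure_compl (isOpen_compIn M x y).measurableSet
      (MeasureTheory.measure_ne_top _ _), MeasureTheory.measure_univ]
  have h12 : (1:ENNReal) - 1/2 = 1/2 := ENNReal.sub_half (by norm_num)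
  have hCchalf : (1:ENNReal)/2 ≤ M.μ Cᶜ := by
    rw [hCc, ← h12]
    exact tsub_le_tsub_left hCle 1
  have hchain : 1/2 + M.μ (D ∩ C) ≤ 1/2 + 0 := by
    calc 1/2 + M.μ (D ∩ C) ≤ M.μ Cᶜ + M.μ (D ∩ C) := add_le_add_left hCchalf _
    _ = M.μ (Cᶜ ∪ (D ∩ C)) := hunion.symm
    _ ≤ M.μ D := MeasureTheory.measure_mono hsub
    _ ≤ 1/2 := hDle
    _ = 1/2 + 0 := (add_zero _).symm
  have := (ENNReal.add_le_add_iff_left (by norm_num : (1/2 : ENNReal) ≠ ⊤)).mp hchain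
  rw [le_zero_iff] at this
  rw [this] at hpos
  exact lt_irrefl 0 hpos

lemma median_exists : ∃ x : M.carrier, M.IsMedian x := by
  classical
  by_contra hno
  push_neg at hno
  have hpick : ∀ x : M.carrier, ∃ y, y ≠ x ∧
      1/2 < M.μ (connectedComponentIn {x}ᶜ y) := by
    intro x
    have h1 := hno x
    rw [MeasuredTree.IsMedian] at h1
    push_neg at h1
    obtain ⟨y, hy, hlt⟩ := h1
    exact ⟨y, hy, by simpa [MeasuredTree.componentMeasure] using hlt⟩
  set Y : M.carrier → M.carrier := fun x => (hpick x).choose with hY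
  set H : M.carrier → Set M.carrier := fun x => connectedComponentIn {x}ᶜ (Y x) with hH
  have hYne : ∀ x, Y x ≠ x := fun x => (hpick x).choose_spec.1
  have hHheavy : ∀ x, 1/2 < M.μ (H x) := fun x => (hpick x).choose_spec.2
  have hHopen : ∀ x, IsOpen (H x) := fun x => isOpen_compIn M x (Y x)
  have hHpre : ∀ x, IsPreconnected (H x) := fun _ => isPreconnected_connectedComponentIn
  have hHclos : ∀ x, x ∈ closure (H x) := fun x => mem_closure_compIn M (hYne x)
  have hpair : ∀ x x' : M.carrier, (H x ∩ H x').Nonempty := by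
    intro x x'
    by_contra hne
    rw [Set.not_nonempty_iff_eq_empty] at hne
    have hdisj : Disjoint (H x) (H x') := Set.disjoint_iff_inter_eq_empty.mpr hne
    have hunion : M.μ (H x ∪ H x') = M.μ (H x) + M.μ (H x') :=
      MeasureTheory.measure_union hdisj (hHopen x').measurableSet
    have h1 : (1:ENNReal) < M.μ (H x) + M.μ (H x') := by
      have h2 := ENNReal.add_lt_add (hHheavy x) (hHheavy x')
      rwa [ENNReal.add_halves] at h2
    have h2 : M.μ (H x ∪ H x') ≤ 1 :=
      le_trans (MeasureTheory.measure_mono (subset_univ _)) (le_of_eq MeasureTheory.measure_univ)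
    rw [hunion] at h2
    exact absurd h1 (not_lt.mpr h2)
  have hclpair : ∀ x x' : M.carrier, (closure (H x) ∩ closure (H x')).Nonempty := by
    intro x x'
    obtain ⟨g, hg1, hg2⟩ := hpair x x'
    exact ⟨g, subset_closure hg1, subset_closure hg2⟩
  -- finite intersection property via Helly
  have hfip : ∀ F : Finset M.carrier, IsPreconnected (⋂ x ∈ F, closure (H x)) ∧
      ∀ z : M.carrier, (closure (H z) ∩ ⋂ x ∈ F, closure (H x)).Nonempty := by
    intro F
    induction F using Finset.induction_on with
    | empty =>
      constructor
      · simp only [Finset.notMem_empty, iInter_of_empty, iInter_univ]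
        exact isPreconnected_univ
      · intro z
        simp only [Finset.notMem_empty, iInter_of_empty, iInter_univ, inter_univ]
        exact ⟨z, hHclos z⟩
    | @insert a F haF ih =>
      constructor
      · rw [Finset.set_biInter_insert]
        exact inter_preconnected M (hHpre a).closure ih.1
      · intro z
        rw [Finset.set_biInter_insert]
        have h3 := helly3 M (isClosed_closure (s := H z)) (isClosed_closure (s := H a))
          (isClosed_biInter (fun x _ => isClosed_closure))
          (hHpre z).closure (hHpre a).closure ih.1
          (hclpair z a) (ih.2 z) (ih.2 a)
        rwa [inter_assoc] at h3
  have hglobal : (⋂ x : M.carrier, closure (H x)).Nonempty := by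
    by_contra hne
    rw [Set.not_nonempty_iff_eq_empty] at hne
    obtain ⟨F, hF⟩ := IsCompact.elim_finite_subfamily_closed isCompact_univ
      (fun x => closure (H x)) (fun _ => isClosed_closure)
      (by rw [univ_inter, hne])
    rw [univ_inter] at hF
    obtain ⟨z⟩ : Nonempty M.carrier := inferInstance
    obtain ⟨g, _, hg2⟩ := (hfip F).2 z
    rw [hF] at hg2
    exact hg2
  obtain ⟨m, hm⟩ := hglobal
  rw [mem_iInter] at hm
  have hmain : ∀ y ∈ H m, 1/2 < M.μ (connectedComponentIn {y}ᶜ m) := by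
    intro y hy
    have hym : y ≠ m := by
      rintro rfl
      exact (connectedComponentIn_subset _ _ hy) rfl
    have hmH : m ∈ H y ∪ {y} := (closure_compIn_subset M y (Y y)) (hm y)
    have hmHy : m ∈ H y := by
      rcases hmH with h' | h'
      · exact h'
      · rw [mem_singleton_iff] at h'
        exact absurd h'.symm hym
    have heq : H y = connectedComponentIn {y}ᶜ m := connectedComponentIn_eq hmHy
    rw [← heq]
    exact hHheavy y
  exact key M m (hYne m) (hHheavy m) hmain

end Main

end MedianAux

/-- Every measured tree has a unique median: there is exactly one point `x` such that
the measure of each connected component of the complement of `x` does not exceed `1/2`. -/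
theorem measuredTree_existsUnique_median (M : MeasuredTree) :
    ∃! x : M.carrier, M.IsMedian x := by
  obtain ⟨x, hx⟩ := MedianAux.median_exists M
  exact ⟨x, hx, fun y hy => MedianAux.median_unique M hy hx⟩
end
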